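/- arXiv:1104.0446 — 4 statements merged into one kernel-verified Lean document; each statement's English description precedes it below -/
import Mathlib

section
/- Let A be a real m×N matrix whose row space R = {Aᵀη : η ∈ ℝ^m} has dimension r with 1 ≤ r ≤ N and is in general position, meaning that for every set s of r coordinates the restriction map R → ℝ^s, v ↦ (v(i))_{i∈s}, is injective. Then the number of binary vectors u0 ∈ {0,1}^N that are uniquely recoverable by (P1) — i.e., such that u0 is the unique u ∈ ℝ^N with A u = A u0 and 0 ≤ u(x) ≤ 1 for all x — equals 2·Σ_{i=0}^{r−1} C(N−1, i). -/
open Finset Matrix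

noncomputable section P1Count

/-- Stiemke's lemma. -/
theorem stiemke {n : ℕ} (K : Submodule ℝ (Fin n → ℝ))
    (h : ∀ v ∈ K, (∀ i, 0 ≤ v i) → v = 0) :
    ∃ w : Fin n → ℝ, (∀ v ∈ K, w ⬝ᵥ v = 0) ∧ ∀ i, 0 < w i := by
  have hdisj : Disjoint (stdSimplex ℝ (Fin n)) (K : Set (Fin n → ℝ)) := by
    rw [Set.disjoint_left]
    rintro x ⟨hx0, hx1⟩ hxK
    have := h x hxK hx0
    subst this
    simp at hx1
  obtain ⟨f, u, v, hfu, huv, hfv⟩ :=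
    geometric_hahn_banach_compact_closed (convex_stdSimplex ℝ (Fin n))
      (isCompact_stdSimplex _ _) (K : Submodule ℝ (Fin n → ℝ)).convex
      (Submodule.closed_of_finiteDimensional K) hdisj
  -- f vanishes on K
  have hfK : ∀ x ∈ K, f x = 0 := by
    intro x hx
    by_contra hne
    have h1 : v < f (((v - 1) / f x) • x) := hfv _ (K.smul_mem _ hx)
    rw [_root_.map_smul, smul_eq_mul, div_mul_cancel₀ _ hne] at h1
    linarith
  have hv0 : v < 0 := by simpa using hfK 0 K.zero_mem ▸ hfv 0 K.zero_mem
  refine ⟨fun i => -f (Pi.single i 1), fun x hx => ?_, fun i => ?_⟩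
  · have := (f : (Fin n → ℝ) →ₗ[ℝ] ℝ).pi_apply_eq_sum_univ x
    simp only [ContinuousLinearMap.coe_coe] at this
    have hx0 := hfK x hx
    rw [this] at hx0
    rw [dotProduct, ← neg_eq_zero, ← hx0]
    rw [← Finset.sum_neg_distrib]
    refine Finset.sum_congr rfl fun i _ => ?_
    have hone : (fun j => if i = j then (1:ℝ) else 0) = Pi.single i 1 := by
      ext j; simp [Pi.single_apply, eq_comm]
    rw [hone, smul_eq_mul]
    ring
  · have := hfu _ (single_mem_stdSimplex ℝ i)
    have hv0' : v < 0 := hv0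
    simp only
    linarith


def bsgn (b : Bool) : ℝ := if b then 1 else -1

@[simp] lemma bsgn_true : bsgn true = 1 := rfl

@[simp] lemma bsgn_false : bsgn false = -1 := rfl

lemma bsgn_sq (b : Bool) : bsgn b * bsgn b = 1 := by cases b <;> simp [bsgn]

lemma bsgn_ne_zero (b : Bool) : bsgn b ≠ 0 := by cases b <;> simp [bsgn]

lemma abs_bsgn (b : Bool) : |bsgn b| = 1 := by cases b <;> simp [bsgn]

def Realized {n : ℕ} (R : Submodule ℝ (Fin n → ℝ)) (σ : Fin n → Bool) : Prop :=
  ∃ w ∈ R, ∀ i, 0 < bsgn (σ i) * w i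

def GP {n : ℕ} (R : Submodule ℝ (Fin n → ℝ)) (r : ℕ) : Prop :=
  ∀ s : Finset (Fin n), s.card = r → ∀ v ∈ R, (∀ i ∈ s, v i = 0) → v = 0

/-- small positive δ beating finitely many constraints -/
lemma exists_pos_forall_mul_lt {k : ℕ} (a c : Fin k → ℝ) (ha : ∀ i, 0 < a i) :
    ∃ δ : ℝ, 0 < δ ∧ ∀ i, δ * |c i| < a i := by
  rcases isEmpty_or_nonempty (Fin k) with h | h
  · exact ⟨1, one_pos, fun i => (h.false i).elim⟩
  · have hne : (Finset.univ : Finset (Fin k)).Nonempty := Finset.univ_nonempty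
    set δ := Finset.univ.inf' hne fun i => a i / (|c i| + 1) with hδ
    have hδpos : 0 < δ := by
      rw [hδ, Finset.lt_inf'_iff]
      intro i _
      exact div_pos (ha i) (by positivity)
    refine ⟨δ, hδpos, fun i => ?_⟩
    have h1 : δ ≤ a i / (|c i| + 1) := Finset.inf'_le _ (Finset.mem_univ i)
    have h2 : δ * (|c i| + 1) ≤ a i := by
      rw [← le_div_iff₀ (by positivity)]; exact h1
    nlinarith [abs_nonneg (c i)]

/-- L1: a generic subspace of positive dimension has, for each coordinate,
an element not vanishing there. -/
lemma exists_ne_zero_coord {n r : ℕ} (R : Submodule ℝ (Fin n → ℝ))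
    (hgp : GP R r) (hdim : Module.finrank ℝ R = r) (hr : 1 ≤ r) (hrn : r ≤ n)
    (j : Fin n) : ∃ u ∈ R, u j ≠ 0 := by
  by_contra hc
  push_neg at hc
  obtain ⟨t, hjt, _, ht_card⟩ :=
    Finset.exists_subsuperset_card_eq (s := ({j} : Finset (Fin n))) (t := Finset.univ)
      (Finset.subset_univ _) (by simpa) (by simpa)
  have hjt : j ∈ t := hjt (Finset.mem_singleton_self j)
  set φ : R →ₗ[ℝ] ({i // i ∈ t.erase j} → ℝ) :=
    LinearMap.pi (fun i => (LinearMap.proj (i : Fin n)).comp R.subtype) with hφ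
  have hinj : Function.Injective φ := by
    rw [← LinearMap.ker_eq_bot, LinearMap.ker_eq_bot']
    intro v hv
    have hv0 : (v : Fin n → ℝ) = 0 := by
      refine hgp t ht_card v v.2 fun i hi => ?_
      by_cases hij : i = j
      · exact hij ▸ hc _ v.2
      · exact congrFun hv ⟨i, Finset.mem_erase.2 ⟨hij, hi⟩⟩
    exact Subtype.ext hv0
  have hle := LinearMap.finrank_le_finrank_of_injective hinj
  rw [hdim, Module.finrank_fintype_fun_eq_card, Fintype.card_coe,
    Finset.card_erase_of_mem hjt, ht_card] at hle
  omega

lemma ncard_realized_bot {n : ℕ} (hn : 1 ≤ n) (R : Submodule ℝ (Fin n → ℝ))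
    (hdim : Module.finrank ℝ R = 0) :
    {σ : Fin n → Bool | Realized R σ}.ncard = 0 := by
  have hR : R = ⊥ := Submodule.finrank_eq_zero.mp hdim
  have : {σ : Fin n → Bool | Realized R σ} = ∅ := by
    ext σ
    simp only [Set.mem_setOf_eq, Set.mem_empty_iff_false, iff_false]
    rintro ⟨w, hwR, hw⟩
    rw [hR, Submodule.mem_bot] at hwR
    have := hw ⟨0, hn⟩
    rw [hwR] at this
    simp at this
  rw [this, Set.ncard_empty]

lemma ncard_realized_top {n : ℕ} (R : Submodule ℝ (Fin n → ℝ))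
    (hdim : Module.finrank ℝ R = n) :
    {σ : Fin n → Bool | Realized R σ}.ncard = 2 ^ n := by
  have hR : R = ⊤ := by
    apply Submodule.eq_top_of_finrank_eq
    rw [hdim, Module.finrank_fintype_fun_eq_card, Fintype.card_fin]
  have : {σ : Fin n → Bool | Realized R σ} = Set.univ := by
    ext σ
    simp only [Set.mem_setOf_eq, Set.mem_univ, iff_true]
    exact ⟨fun i => bsgn (σ i), hR ▸ Submodule.mem_top, fun i => by
      rw [bsgn_sq]; norm_num⟩
  rw [this, Set.ncard_univ, Nat.card_eq_fintype_card, Fintype.card_fun]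
  simp

lemma finrank_map_of_inj {n k : ℕ} (f : (Fin n → ℝ) →ₗ[ℝ] (Fin k → ℝ))
    (P : Submodule ℝ (Fin n → ℝ)) (h : ∀ v ∈ P, f v = 0 → v = 0) :
    Module.finrank ℝ (P.map f) = Module.finrank ℝ P := by
  have heq : P.map f = LinearMap.range (f ∘ₗ P.subtype) := by
    rw [LinearMap.range_comp, Submodule.range_subtype]
  rw [heq]
  apply LinearMap.finrank_range_of_inj
  rw [← LinearMap.ker_eq_bot, LinearMap.ker_eq_bot']
  intro v hv
  exact Subtype.ext (h v v.2 hv)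

section Recursion

variable {m r : ℕ}

set_option maxHeartbeats 1000000 in
lemma ncard_realized_succ (hr : 1 ≤ r) (hrm : r ≤ m)
    (R : Submodule ℝ (Fin (m + 1) → ℝ)) (hdim : Module.finrank ℝ R = r)
    (hgp : GP R r) :
    ∃ R' R₀ : Submodule ℝ (Fin m → ℝ),
      Module.finrank ℝ R' = r ∧ GP R' r ∧
      Module.finrank ℝ R₀ = r - 1 ∧ GP R₀ (r - 1) ∧
      {σ : Fin (m + 1) → Bool | Realized R σ}.ncard =
        {τ : Fin m → Bool | Realized R' τ}.ncard +
        {τ : Fin m → Bool | Realized R₀ τ}.ncard := by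
  set πl : (Fin (m + 1) → ℝ) →ₗ[ℝ] (Fin m → ℝ) := LinearMap.funLeft ℝ ℝ Fin.castSucc with hπl
  have hπapp : ∀ (v : Fin (m+1) → ℝ) (i : Fin m), πl v i = v i.castSucc := fun v i => rfl
  set K0 : Submodule ℝ (Fin (m + 1) → ℝ) :=
    R ⊓ LinearMap.ker (LinearMap.proj (R := ℝ) (Fin.last m)) with hK0
  have hK0mem : ∀ v, v ∈ K0 ↔ v ∈ R ∧ v (Fin.last m) = 0 := by
    intro v
    simp [hK0, LinearMap.mem_ker]
  set R' := R.map πl with hR'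
  set R₀ := K0.map πl with hR₀
  -- injectivity of projection on R
  have hπR_inj : ∀ v ∈ R, πl v = 0 → v = 0 := by
    intro v hv hπv
    obtain ⟨s, _, hs_card⟩ := Finset.exists_subset_card_eq
      (show r ≤ (Finset.univ : Finset (Fin m)).card by simpa)
    refine hgp (s.map Fin.castSuccEmb) (by simpa using hs_card) v hv ?_
    intro i hi
    obtain ⟨i₀, _, rfl⟩ := Finset.mem_map.mp hi
    exact congrFun hπv i₀
  have hπK0_inj : ∀ v ∈ K0, πl v = 0 → v = 0 := by
    intro v hv hπv
    rw [hK0mem] at hv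
    ext i
    refine Fin.lastCases ?_ ?_ i
    · simpa using hv.2
    · intro i₀
      simpa [hπapp] using congrFun hπv i₀
  have hdim' : Module.finrank ℝ R' = r := by
    rw [hR', finrank_map_of_inj _ _ hπR_inj, hdim]
  have hgp' : GP R' r := by
    intro s hs v' hv' hvan
    obtain ⟨v, hv, rfl⟩ := Submodule.mem_map.mp hv'
    have hv0 : v = 0 := by
      refine hgp (s.map Fin.castSuccEmb) (by simpa using hs) v hv ?_
      intro i hi
      obtain ⟨i₀, hi₀, rfl⟩ := Finset.mem_map.mp hi
      exact hvan i₀ hi₀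
    rw [hv0, map_zero]
  -- element of R with nonzero last coordinate
  obtain ⟨u, huR, hulast⟩ := exists_ne_zero_coord R hgp hdim hr (by omega) (Fin.last m)
  have hdimK0 : Module.finrank ℝ K0 = r - 1 := by
    set ψ : R →ₗ[ℝ] ℝ := (LinearMap.proj (R := ℝ) (Fin.last m)).comp R.subtype with hψ
    have hrange : LinearMap.range ψ = ⊤ := by
      rw [eq_top_iff]
      rintro x -
      refine ⟨(x / u (Fin.last m)) • ⟨u, huR⟩, ?_⟩
      show (x / u (Fin.last m)) * u (Fin.last m) = x
      field_simp
    have hker : K0 = (LinearMap.ker ψ).map R.subtype := by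
      rw [hψ, LinearMap.ker_comp, Submodule.map_comap_subtype]
    have h1 : Module.finrank ℝ (LinearMap.range ψ) + Module.finrank ℝ (LinearMap.ker ψ)
        = Module.finrank ℝ R := LinearMap.finrank_range_add_finrank_ker ψ
    rw [hrange, hdim] at h1
    have h2 : Module.finrank ℝ (⊤ : Submodule ℝ ℝ) = 1 := by simp
    have h3 : Module.finrank ℝ (LinearMap.ker ψ) = r - 1 := by omega
    rw [hker, Submodule.finrank_map_subtype_eq, h3]
  have hdim₀ : Module.finrank ℝ R₀ = r - 1 := by
    rw [hR₀, finrank_map_of_inj _ _ hπK0_inj, hdimK0]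
  have hgp₀ : GP R₀ (r - 1) := by
    intro s hs v' hv' hvan
    obtain ⟨v, hv, rfl⟩ := Submodule.mem_map.mp hv'
    rw [hK0mem] at hv
    have hlast_notin : Fin.last m ∉ s.map Fin.castSuccEmb := by
      intro hmem
      obtain ⟨i₀, _, hi₀⟩ := Finset.mem_map.mp hmem
      exact absurd hi₀ (Fin.castSucc_lt_last i₀).ne
    have hv0 : v = 0 := by
      refine hgp (insert (Fin.last m) (s.map Fin.castSuccEmb)) ?_ v hv.1 ?_
      · rw [Finset.card_insert_of_notMem hlast_notin, Finset.card_map, hs]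
        omega
      · intro i hi
        rcases Finset.mem_insert.mp hi with h | h
        · rw [h]; exact hv.2
        · obtain ⟨i₀, hi₀, rfl⟩ := Finset.mem_map.mp h
          exact hvan i₀ hi₀
    rw [hv0, map_zero]
  refine ⟨R', R₀, hdim', hgp', hdim₀, hgp₀, ?_⟩
  -- the four facts
  have F3 : ∀ (τ : Fin m → Bool) (b : Bool), Realized R (Fin.snoc τ b) → Realized R' τ := by
    rintro τ b ⟨w, hwR, hw⟩
    refine ⟨πl w, Submodule.mem_map_of_mem hwR, fun i => ?_⟩
    have := hw i.castSucc
    rwa [Fin.snoc_castSucc] at this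
  have F2 : ∀ (τ : Fin m → Bool), Realized R₀ τ → ∀ b, Realized R (Fin.snoc τ b) := by
    rintro τ ⟨v', hv', hreal⟩ b
    obtain ⟨v, hv, rfl⟩ := Submodule.mem_map.mp hv'
    rw [hK0mem] at hv
    set u' : Fin (m + 1) → ℝ := (bsgn b * (u (Fin.last m))⁻¹) • u with hu'
    have hu'R : u' ∈ R := Submodule.smul_mem R _ huR
    have hu'last : u' (Fin.last m) = bsgn b := by
      show (bsgn b * (u (Fin.last m))⁻¹) * u (Fin.last m) = bsgn b
      field_simp
    obtain ⟨δ, hδpos, hδ⟩ := exists_pos_forall_mul_lt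
      (fun i => bsgn (τ i) * v i.castSucc) (fun i => u' i.castSucc)
      (fun i => hreal i)
    refine ⟨v + δ • u', Submodule.add_mem R hv.1 (Submodule.smul_mem R _ hu'R), fun i => ?_⟩
    refine Fin.lastCases ?_ ?_ i
    · rw [Fin.snoc_last]
      show 0 < bsgn b * (v (Fin.last m) + δ * u' (Fin.last m))
      rw [hv.2, hu'last, zero_add, ← mul_assoc, mul_comm (bsgn b), mul_assoc, bsgn_sq]
      simpa using hδpos
    · intro i₀
      rw [Fin.snoc_castSucc]
      show 0 < bsgn (τ i₀) * (v i₀.castSucc + δ * u' i₀.castSucc)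
      have h1 := hδ i₀
      have h2 : |bsgn (τ i₀) * (δ * u' i₀.castSucc)| ≤ δ * |u' i₀.castSucc| := by
        rw [abs_mul, abs_bsgn, one_mul, abs_mul, abs_of_pos hδpos]
      have h3 := neg_abs_le (bsgn (τ i₀) * (δ * u' i₀.castSucc))
      nlinarith [hreal i₀]
  have F1 : ∀ (τ : Fin m → Bool), Realized R' τ →
      Realized R (Fin.snoc τ true) ∨ Realized R (Fin.snoc τ false) := by
    rintro τ ⟨w', hw', hreal⟩
    obtain ⟨w, hw, rfl⟩ := Submodule.mem_map.mp hw'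
    rcases lt_trichotomy (w (Fin.last m)) 0 with hlt | heq | hgt
    · right
      refine ⟨w, hw, fun i => ?_⟩
      refine Fin.lastCases ?_ ?_ i
      · rw [Fin.snoc_last]
        show 0 < bsgn false * w (Fin.last m)
        rw [bsgn_false]
        nlinarith
      · intro i₀; rw [Fin.snoc_castSucc]; exact hreal i₀
    · left
      have : Realized R₀ τ := by
        refine ⟨πl w, Submodule.mem_map_of_mem ((hK0mem w).mpr ⟨hw, heq⟩), hreal⟩
      exact F2 τ this true
    · left
      refine ⟨w, hw, fun i => ?_⟩
      refine Fin.lastCases ?_ ?_ i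
      · rw [Fin.snoc_last]
        show 0 < bsgn true * w (Fin.last m)
        rw [bsgn_true]
        nlinarith
      · intro i₀; rw [Fin.snoc_castSucc]; exact hreal i₀
  have F4 : ∀ (τ : Fin m → Bool), Realized R (Fin.snoc τ true) →
      Realized R (Fin.snoc τ false) → Realized R₀ τ := by
    rintro τ ⟨wp, hwp, hp⟩ ⟨wn, hwn, hn⟩
    have ha : 0 < wp (Fin.last m) := by
      have := hp (Fin.last m)
      rw [Fin.snoc_last] at this
      rw [bsgn_true, one_mul] at this
      exact this
    have hb : 0 < -wn (Fin.last m) := by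
      have := hn (Fin.last m)
      rw [Fin.snoc_last] at this
      rw [bsgn_false] at this
      linarith
    set v := (-wn (Fin.last m)) • wp + (wp (Fin.last m)) • wn with hv
    have hvR : v ∈ R := Submodule.add_mem R (Submodule.smul_mem R _ hwp)
      (Submodule.smul_mem R _ hwn)
    have hvlast : v (Fin.last m) = 0 := by
      show (-wn (Fin.last m)) * wp (Fin.last m) + wp (Fin.last m) * wn (Fin.last m) = 0
      ring
    refine ⟨πl v, Submodule.mem_map_of_mem ((hK0mem v).mpr ⟨hvR, hvlast⟩), fun i => ?_⟩
    show 0 < bsgn (τ i) * ((-wn (Fin.last m)) * wp i.castSucc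
      + wp (Fin.last m) * wn i.castSucc)
    have h1 := hp i.castSucc
    have h2 := hn i.castSucc
    rw [Fin.snoc_castSucc] at h1 h2
    have heq : bsgn (τ i) * ((-wn (Fin.last m)) * wp i.castSucc
        + wp (Fin.last m) * wn i.castSucc)
        = (-wn (Fin.last m)) * (bsgn (τ i) * wp i.castSucc)
          + wp (Fin.last m) * (bsgn (τ i) * wn i.castSucc) := by ring
    rw [heq]
    exact add_pos (mul_pos hb h1) (mul_pos ha h2)
  -- counting
  classical
  have hsplit : {σ : Fin (m + 1) → Bool | Realized R σ} =
      (fun τ : Fin m → Bool => (Fin.snoc τ true : Fin (m + 1) → Bool)) ''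
        {τ : Fin m → Bool | Realized R (Fin.snoc τ true)} ∪
      (fun τ : Fin m → Bool => (Fin.snoc τ false : Fin (m + 1) → Bool)) ''
        {τ : Fin m → Bool | Realized R (Fin.snoc τ false)} := by
    ext σ
    constructor
    · intro hσ
      rcases Bool.eq_false_or_eq_true (σ (Fin.last m)) with h | h
      · left
        refine ⟨Fin.init σ, ?_, ?_⟩
        · show Realized R (Fin.snoc (Fin.init σ) true)
          rw [← h, Fin.snoc_init_self]
          exact hσ
        · show (Fin.snoc (Fin.init σ) true : Fin (m + 1) → Bool) = σ
          rw [← h, Fin.snoc_init_self]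
      · right
        refine ⟨Fin.init σ, ?_, ?_⟩
        · show Realized R (Fin.snoc (Fin.init σ) false)
          rw [← h, Fin.snoc_init_self]
          exact hσ
        · show (Fin.snoc (Fin.init σ) false : Fin (m + 1) → Bool) = σ
          rw [← h, Fin.snoc_init_self]
    · rintro (⟨τ, hτ, rfl⟩ | ⟨τ, hτ, rfl⟩) <;> exact hτ
  have hinj : ∀ b : Bool, Function.Injective
      (fun τ : Fin m → Bool => (Fin.snoc τ b : Fin (m + 1) → Bool)) := by
    intro b a c h
    have := congrArg Fin.init h
    simpa [Fin.init_snoc] using this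
  have hdisj : Disjoint
      ((fun τ : Fin m → Bool => (Fin.snoc τ true : Fin (m + 1) → Bool)) ''
        {τ : Fin m → Bool | Realized R (Fin.snoc τ true)})
      ((fun τ : Fin m → Bool => (Fin.snoc τ false : Fin (m + 1) → Bool)) ''
        {τ : Fin m → Bool | Realized R (Fin.snoc τ false)}) := by
    rw [Set.disjoint_left]
    rintro x ⟨τ, _, rfl⟩ ⟨τ', _, hx⟩
    have := congrFun hx (Fin.last m)
    simp [Fin.snoc_last] at this
  have hcount1 : {σ : Fin (m + 1) → Bool | Realized R σ}.ncard =
      {τ : Fin m → Bool | Realized R (Fin.snoc τ true)}.ncard +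
      {τ : Fin m → Bool | Realized R (Fin.snoc τ false)}.ncard := by
    rw [hsplit, Set.ncard_union_eq hdisj (Set.toFinite _) (Set.toFinite _),
      Set.ncard_image_of_injective _ (hinj true), Set.ncard_image_of_injective _ (hinj false)]
  have hU : {τ : Fin m → Bool | Realized R (Fin.snoc τ true)} ∪
      {τ : Fin m → Bool | Realized R (Fin.snoc τ false)} =
      {τ : Fin m → Bool | Realized R' τ} := by
    ext τ
    constructor
    · rintro (h | h)
      · exact F3 τ true h
      · exact F3 τ false h
    · intro h
      exact F1 τ h
  have hI : {τ : Fin m → Bool | Realized R (Fin.snoc τ true)} ∩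
      {τ : Fin m → Bool | Realized R (Fin.snoc τ false)} =
      {τ : Fin m → Bool | Realized R₀ τ} := by
    ext τ
    constructor
    · rintro ⟨h1, h2⟩
      exact F4 τ h1 h2
    · intro h
      exact ⟨F2 τ h true, F2 τ h false⟩
  have hcount2 := Set.ncard_union_add_ncard_inter
    {τ : Fin m → Bool | Realized R (Fin.snoc τ true)}
    {τ : Fin m → Bool | Realized R (Fin.snoc τ false)}
    (Set.toFinite _) (Set.toFinite _)
  rw [hU, hI] at hcount2
  omega

end Recursion

lemma sum_choose_rec (k r : ℕ) :
    ∑ i ∈ Finset.range (r + 1), (k + 1).choose i =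
      ∑ i ∈ Finset.range (r + 1), k.choose i + ∑ i ∈ Finset.range r, k.choose i := by
  induction r with
  | zero => simp
  | succ r ih =>
    rw [Finset.sum_range_succ (fun i => (k + 1).choose i), ih,
      Finset.sum_range_succ (fun i => k.choose i) (r + 1),
      Finset.sum_range_succ (fun i => k.choose i) r,
      Nat.choose_succ_succ]
    simp only [Nat.succ_eq_add_one]
    omega

lemma count_realized : ∀ n r : ℕ, 1 ≤ r → r ≤ n →
    ∀ R : Submodule ℝ (Fin n → ℝ), Module.finrank ℝ R = r → GP R r →
    {σ : Fin n → Bool | Realized R σ}.ncard =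
      2 * ∑ i ∈ Finset.range r, (n - 1).choose i := by
  intro n
  induction n with
  | zero => intro r h1 h2; omega
  | succ m ih =>
    intro r h1 h2 R hdim hgp
    by_cases hcase : r = m + 1
    · subst hcase
      rw [ncard_realized_top R (by rw [hdim]), Nat.succ_sub_one, Nat.sum_range_choose]
      ring
    · have hrm : r ≤ m := by omega
      obtain ⟨R', R₀, hdim', hgp', hdim₀, hgp₀, hcount⟩ :=
        ncard_realized_succ h1 hrm R hdim hgp
      rw [hcount, ih r h1 hrm R' hdim' hgp']
      rcases Nat.eq_or_lt_of_le h1 with hone | h2r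
      · subst hone  -- wrong direction? h1 : 1 ≤ r, eq case : 1 = r
        rw [ncard_realized_bot (by omega) R₀ (by simpa using hdim₀)]
        simp
      · rw [ih (r - 1) (by omega) (by omega) R₀ hdim₀ hgp₀]
        obtain ⟨k, rfl⟩ : ∃ k, m = k + 1 := ⟨m - 1, by omega⟩
        obtain ⟨r', rfl⟩ : ∃ r', r = r' + 1 := ⟨r - 1, by omega⟩
        simp only [Nat.succ_sub_one, Nat.add_sub_cancel]
        rw [sum_choose_rec k r']
        ring

lemma mem_rowspace_of_vanish {m N : ℕ} (A : Matrix (Fin m) (Fin N) ℝ) (w : Fin N → ℝ)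
    (hw : ∀ v, A.mulVec v = 0 → w ⬝ᵥ v = 0) :
    w ∈ LinearMap.range (Matrix.mulVecLin A.transpose) := by
  classical
  set B := A.mulVecLin with hB
  set f : (Fin N → ℝ) →ₗ[ℝ] ℝ :=
    { toFun := fun x => w ⬝ᵥ x
      map_add' := fun x y => dotProduct_add w x y
      map_smul' := fun c x => by
        simp only [RingHom.id_apply, smul_eq_mul]
        rw [dotProduct_smul, smul_eq_mul] } with hf
  have hker : LinearMap.ker B ≤ LinearMap.ker f := by
    intro v hv
    rw [LinearMap.mem_ker] at hv ⊢
    exact hw v (by simpa [hB] using hv)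
  set g0 : ↥(LinearMap.range B) →ₗ[ℝ] ℝ :=
    (Submodule.liftQ (LinearMap.ker B) f hker) ∘ₗ
      (B.quotKerEquivRange.symm : ↥(LinearMap.range B) →ₗ[ℝ] _) with hg0
  obtain ⟨g, hg⟩ := LinearMap.exists_extend g0
  have hgB : ∀ x, g (B x) = f x := by
    intro x
    have h1 : (⟨B x, LinearMap.mem_range_self B x⟩ : ↥(LinearMap.range B)) =
        B.quotKerEquivRange (Submodule.Quotient.mk x) := by
      apply Subtype.ext
      simp [LinearMap.quotKerEquivRange_apply_mk]
    have h2 : g (B x) = (g ∘ₗ (LinearMap.range B).subtype)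
        ⟨B x, LinearMap.mem_range_self B x⟩ := rfl
    rw [h2, hg, hg0]
    simp only [LinearMap.coe_comp, Function.comp_apply, LinearEquiv.coe_coe]
    rw [h1, LinearEquiv.symm_apply_apply, Submodule.liftQ_apply]
  refine ⟨fun j => g (fun k => if j = k then (1:ℝ) else 0), ?_⟩
  ext i
  have hwi : w i = f (fun k => if i = k then (1:ℝ) else 0) := by
    show w i = w ⬝ᵥ _
    rw [dotProduct]
    simp [mul_ite]
  rw [Matrix.mulVecLin_apply]
  have hmv : A.mulVec (fun k => if i = k then (1:ℝ) else 0) = fun j => A j i := by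
    ext j
    rw [Matrix.mulVec, dotProduct]
    simp [mul_ite]
  have hgsum := g.pi_apply_eq_sum_univ (A.mulVec (fun k => if i = k then (1:ℝ) else 0))
  have h4 : g (A.mulVec (fun k => if i = k then (1:ℝ) else 0)) = w i := by
    have : A.mulVec (fun k => if i = k then (1:ℝ) else 0)
        = B (fun k => if i = k then (1:ℝ) else 0) := rfl
    rw [this, hgB]
    exact hwi.symm
  rw [hmv] at hgsum h4
  rw [Matrix.mulVec, dotProduct, ← h4, hgsum]
  exact Finset.sum_congr rfl fun j _ => by rw [Matrix.transpose_apply, smul_eq_mul]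

lemma recover_iff {m N : ℕ} (A : Matrix (Fin m) (Fin N) ℝ)
    (u0 : Fin N → ℝ) (hbin : ∀ x, u0 x = 0 ∨ u0 x = 1) :
    (∀ u : Fin N → ℝ, A.mulVec u = A.mulVec u0 → (∀ x, 0 ≤ u x ∧ u x ≤ 1) → u = u0)
      ↔ Realized (LinearMap.range (Matrix.mulVecLin A.transpose))
          (fun i => decide (u0 i = 1)) := by
  classical
  set σ : Fin N → Bool := fun i => decide (u0 i = 1) with hσ
  have hσ1 : ∀ i, u0 i = 1 → σ i = true := fun i h => by simp [hσ, h]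
  have hσ0 : ∀ i, u0 i = 0 → σ i = false := fun i h => by simp [hσ, h]
  constructor
  · intro huniq
    by_contra hnr
    by_cases hP : ∃ h : Fin N → ℝ, A.mulVec h = 0 ∧ h ≠ 0 ∧ ∀ i, bsgn (σ i) * h i ≤ 0
    · obtain ⟨h, hA, hne, hsgn⟩ := hP
      set ε : ℝ := (1 + ∑ j, |h j|)⁻¹ with hε
      have hsum_nonneg : (0:ℝ) ≤ ∑ j, |h j| := Finset.sum_nonneg fun j _ => abs_nonneg _
      have hεpos : 0 < ε := by rw [hε]; positivity
      have hbound : ∀ x, ε * |h x| ≤ 1 := by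
        intro x
        have h1 : |h x| ≤ ∑ j, |h j| :=
          Finset.single_le_sum (f := fun j => |h j|) (fun j _ => abs_nonneg _)
            (Finset.mem_univ x)
        rw [hε, inv_mul_le_iff₀ (by positivity), mul_one]
        linarith
      have hAu : A.mulVec (u0 + ε • h) = A.mulVec u0 := by
        rw [Matrix.mulVec_add, Matrix.mulVec_smul, hA]
        simp
      have hfeas : ∀ x, 0 ≤ (u0 + ε • h) x ∧ (u0 + ε • h) x ≤ 1 := by
        intro x
        have hb := hbound x
        have habs := le_abs_self (h x)
        have habs' := neg_abs_le (h x)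
        rcases hbin x with h0 | h1
        · have hs := hsgn x
          rw [hσ0 x h0, bsgn_false] at hs
          have hx0 : 0 ≤ h x := by linarith
          have : (u0 + ε • h) x = ε * h x := by
            show u0 x + ε * h x = ε * h x
            rw [h0, zero_add]
          rw [this]
          constructor
          · positivity
          · calc ε * h x ≤ ε * |h x| := by nlinarith
              _ ≤ 1 := hb
        · have hs := hsgn x
          rw [hσ1 x h1, bsgn_true, one_mul] at hs
          have : (u0 + ε • h) x = 1 + ε * h x := by
            show u0 x + ε * h x = 1 + ε * h x
            rw [h1]
          rw [this]
          constructor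
          · have : ε * |h x| = -(ε * h x) := by
              rw [abs_of_nonpos hs]; ring
            linarith
          · nlinarith
      have hu := huniq _ hAu hfeas
      apply hne
      have hε0 : ε • h = 0 := by
        have := congrArg (fun v => v - u0) hu
        simpa using this
      funext i
      have := congrFun hε0 i
      simp only [Pi.smul_apply, smul_eq_mul, Pi.zero_apply] at this
      have := mul_eq_zero.mp this
      rcases this with h' | h'
      · exact absurd h' (ne_of_gt hεpos)
      · exact h'
    · push_neg at hP
      -- build the flip map D
      set D : (Fin N → ℝ) →ₗ[ℝ] (Fin N → ℝ) :=
        LinearMap.pi (fun i => bsgn (σ i) • LinearMap.proj i) with hD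
      have hDapp : ∀ (x : Fin N → ℝ) (i : Fin N), D x i = bsgn (σ i) * x i :=
        fun x i => rfl
      have hDD : ∀ x : Fin N → ℝ, D (D x) = x := by
        intro x
        funext i
        rw [hDapp, hDapp, ← mul_assoc, bsgn_sq, one_mul]
      set K' : Submodule ℝ (Fin N → ℝ) := LinearMap.ker (A.mulVecLin ∘ₗ D) with hK'
      have hstiemke_hyp : ∀ v ∈ K', (∀ i, 0 ≤ v i) → v = 0 := by
        intro v hv hnn
        rw [hK', LinearMap.mem_ker, LinearMap.comp_apply] at hv
        by_contra hvne
        have hDvA : A.mulVec (-(D v)) = 0 := by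
          rw [Matrix.mulVec_neg]
          rw [Matrix.mulVecLin_apply] at hv
          rw [hv, neg_zero]
        have hDvne : -(D v) ≠ 0 := by
          intro hc
          apply hvne
          have : D v = 0 := neg_eq_zero.mp hc
          funext i
          have h2 := congrFun this i
          rw [hDapp] at h2
          rcases mul_eq_zero.mp h2 with h' | h'
          · exact absurd h' (bsgn_ne_zero _)
          · exact h'
        obtain ⟨i, hi⟩ := hP _ hDvA hDvne
        simp only [Pi.neg_apply] at hi
        have heq : bsgn (σ i) * -(D v i) = -(v i) := by
          rw [hDapp, mul_neg, ← mul_assoc, bsgn_sq, one_mul]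
        rw [heq] at hi
        linarith [hnn i]
      obtain ⟨w', hw'K, hw'pos⟩ := stiemke K' hstiemke_hyp
      apply hnr
      refine ⟨D w', ?_, fun i => ?_⟩
      · apply mem_rowspace_of_vanish
        intro v hv
        have hDv : D v ∈ K' := by
          rw [hK', LinearMap.mem_ker, LinearMap.comp_apply, hDD]
          rw [Matrix.mulVecLin_apply, hv]
        have := hw'K _ hDv
        rw [dotProduct] at this ⊢
        rw [← this]
        refine Finset.sum_congr rfl fun j _ => ?_
        rw [hDapp, hDapp]
        ring
      · rw [hDapp, ← mul_assoc, bsgn_sq, one_mul]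
        exact hw'pos i
  · rintro ⟨w, hwR, hw⟩ u hAu hbox
    obtain ⟨η, hη⟩ := hwR
    set h : Fin N → ℝ := u - u0 with hh
    have hAh : A.mulVec h = 0 := by
      rw [hh, Matrix.mulVec_sub, hAu, sub_self]
    have hdot : w ⬝ᵥ h = 0 := by
      rw [dotProduct_comm, ← hη, Matrix.mulVecLin_apply,
        Matrix.dotProduct_mulVec, Matrix.vecMul_transpose, hAh,
        zero_dotProduct]
    have hterm : ∀ i, w i * h i = (bsgn (σ i) * w i) * (bsgn (σ i) * h i) := by
      intro i
      calc w i * h i = (bsgn (σ i) * bsgn (σ i)) * (w i * h i) := by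
            rw [bsgn_sq, one_mul]
        _ = (bsgn (σ i) * w i) * (bsgn (σ i) * h i) := by ring
    have hsgnh : ∀ i, bsgn (σ i) * h i ≤ 0 := by
      intro i
      rcases hbin i with h0 | h1
      · rw [hσ0 i h0, bsgn_false]
        have : h i = u i - 0 := by rw [hh]; simp [h0]
        have := (hbox i).1
        rw [hh]
        show -(1:ℝ) * (u i - u0 i) ≤ 0
        rw [h0]
        linarith
      · rw [hσ1 i h1, bsgn_true, one_mul, hh]
        show u i - u0 i ≤ 0
        rw [h1]
        linarith [(hbox i).2]
    have hnonpos : ∀ i ∈ Finset.univ, w i * h i ≤ (0:ℝ) := by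
      intro i _
      rw [hterm i]
      exact mul_nonpos_of_nonneg_of_nonpos (le_of_lt (hw i)) (hsgnh i)
    have hzero : ∀ i ∈ Finset.univ, w i * h i = (0:ℝ) := by
      rw [← Finset.sum_eq_zero_iff_of_nonpos hnonpos]
      rw [dotProduct] at hdot
      exact hdot
    funext i
    have h1 := hzero i (Finset.mem_univ i)
    rw [hterm i] at h1
    rcases mul_eq_zero.mp h1 with h' | h'
    · exact absurd h' (ne_of_gt (hw i))
    · rcases mul_eq_zero.mp h' with h'' | h''
      · exact absurd h'' (bsgn_ne_zero _)
      · have : u i - u0 i = 0 := h''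
        linarith

end P1Count

/-- If the row space of `A` has dimension `r` and is in general position, then exactly
`2 ∑_{i=0}^{r-1} C(N-1, i)` of the `2^N` binary vectors are uniquely recoverable by
the box-constrained problem (P1). -/
theorem stmt_13 (m N r : ℕ) (hr : 1 ≤ r) (hrN : r ≤ N)
    (A : Matrix (Fin m) (Fin N) ℝ) (R : Submodule ℝ (Fin N → ℝ))
    (hR : R = LinearMap.range (Matrix.mulVecLin A.transpose))
    (hdim : Module.finrank ℝ R = r)
    (hgen : ∀ s : Finset (Fin N), s.card = r →
      Function.Injective fun v : R => fun i : s => (v : Fin N → ℝ) i) :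
    Nat.card {u0 : Fin N → ℝ //
        (∀ x, u0 x = 0 ∨ u0 x = 1) ∧
        ∀ u : Fin N → ℝ, A.mulVec u = A.mulVec u0 →
          (∀ x, 0 ≤ u x ∧ u x ≤ 1) → u = u0} =
      2 * ∑ i ∈ Finset.range r, Nat.choose (N - 1) i := by
  classical
  have hgp : GP R r := by
    intro s hs v hv hvan
    have hinj := hgen s hs
    have h0 : (fun i : s => ((⟨v, hv⟩ : R) : Fin N → ℝ) i)
        = (fun i : s => ((0 : R) : Fin N → ℝ) i) := by
      funext i
      simp only [Submodule.coe_zero, Pi.zero_apply]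
      exact hvan i i.2
    have := hinj h0
    exact congrArg Subtype.val this
  subst hR
  set R := LinearMap.range (Matrix.mulVecLin A.transpose) with hRdef
  have hcard1 : Nat.card {u0 : Fin N → ℝ //
      (∀ x, u0 x = 0 ∨ u0 x = 1) ∧
      ∀ u : Fin N → ℝ, A.mulVec u = A.mulVec u0 →
        (∀ x, 0 ≤ u x ∧ u x ≤ 1) → u = u0} =
      Nat.card {σ : Fin N → Bool // Realized R σ} := by
    apply Nat.card_congr
    refine ⟨fun u0 => ⟨fun i => decide (u0.1 i = 1),
        (recover_iff A u0.1 u0.2.1).mp u0.2.2⟩,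
      fun σ => ⟨fun i => if σ.1 i then (1:ℝ) else 0, ?_, ?_⟩, ?_, ?_⟩
    · intro x
      by_cases h : σ.1 x <;> simp [h]
    · have hdec : (fun i => decide ((if σ.1 i then (1:ℝ) else 0) = 1)) = σ.1 := by
        funext i
        by_cases h : σ.1 i <;> simp [h]
      refine (recover_iff A _ ?_).mpr ?_
      · intro x
        by_cases h : σ.1 x <;> simp [h]
      · rw [hdec]
        exact σ.2
    · intro u0
      apply Subtype.ext
      funext x
      rcases u0.2.1 x with h | h <;> simp [h]
    · intro σ
      apply Subtype.ext
      funext i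
      by_cases h : σ.1 i <;> simp [h]
  rw [hcard1]
  have hcard2 : Nat.card {σ : Fin N → Bool // Realized R σ} =
      {σ : Fin N → Bool | Realized R σ}.ncard :=
    Nat.card_coe_set_eq _
  rw [hcard2]
  exact count_realized N r hr hrN R hdim hgp
end

section
/- (Robustness of the recovery.) Let A be a real m×N matrix, let u0 ∈ ℝ^N be a binary vector (u0(x) ∈ {0,1} for all x), set b = A u0, and suppose u0 is the unique u ∈ ℝ^N with A u = b and 0 ≤ u(x) ≤ 1 for all x. Then there exists h > 0 such that for every ε ∈ ℝ^m with ‖ε‖₂ < h and every ũ minimizing u ↦ ‖A u − (b + ε)‖₂² over {u ∈ ℝ^N : 0 ≤ u(x) ≤ 1 for all x}, one has |ũ(x) − u0(x)| < 1/2 for every x; in particular the componentwise threshold of ũ at 1/2 equals u0. -/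
/-- Minkowski inequality for finite sums of squares. -/
lemma minkowski_aux (m : ℕ) (a b : Fin m → ℝ) :
    Real.sqrt (∑ i, (a i + b i) ^ 2) ≤
      Real.sqrt (∑ i, (a i) ^ 2) + Real.sqrt (∑ i, (b i) ^ 2) := by
  have h := norm_add_le ((WithLp.equiv 2 (Fin m → ℝ)).symm a)
    ((WithLp.equiv 2 (Fin m → ℝ)).symm b)
  simpa [EuclideanSpace.norm_eq, sq_abs] using h

/-- Theorem (robustness of the recovery): if the binary vector `u0` is the unique
solution of (P1), then for all small enough perturbations `ε` of the data, every
minimizer of `‖Au - (b + ε)‖₂²` over the box `[0,1]^N` lies within `1/2` of `u0`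
componentwise; in particular its threshold at `1/2` equals `u0`. -/
theorem stmt_16 (m N : ℕ) (A : Matrix (Fin m) (Fin N) ℝ) (u0 : Fin N → ℝ)
    (hbin : ∀ x, u0 x = 0 ∨ u0 x = 1)
    (huniq : ∀ u : Fin N → ℝ, A.mulVec u = A.mulVec u0 →
      (∀ x, 0 ≤ u x ∧ u x ≤ 1) → u = u0) :
    ∃ h : ℝ, 0 < h ∧
      ∀ ε : Fin m → ℝ, Real.sqrt (∑ i, ε i ^ 2) < h →
      ∀ ut : Fin N → ℝ, (∀ x, 0 ≤ ut x ∧ ut x ≤ 1) →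
      (∀ u : Fin N → ℝ, (∀ x, 0 ≤ u x ∧ u x ≤ 1) →
        (∑ i, (A.mulVec ut i - (A.mulVec u0 i + ε i)) ^ 2) ≤
        (∑ i, (A.mulVec u i - (A.mulVec u0 i + ε i)) ^ 2)) →
      (∀ x, |ut x - u0 x| < 1 / 2) ∧
      (∀ x, (if 1 / 2 ≤ ut x then (1 : ℝ) else 0) = u0 x) := by
  classical
  -- the objective without noise
  set g : (Fin N → ℝ) → ℝ := fun u => ∑ i, (A.mulVec u i - A.mulVec u0 i) ^ 2 with hgdef
  have hgcont : Continuous g := by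
    apply continuous_finset_sum
    intro i _
    apply Continuous.pow
    apply Continuous.sub _ continuous_const
    simp only [Matrix.mulVec, dotProduct]
    exact continuous_finset_sum _ fun j _ => continuous_const.mul (continuous_apply j)
  have hgnonneg : ∀ u, 0 ≤ g u := fun u => Finset.sum_nonneg fun i _ => sq_nonneg _
  have hgzero : ∀ u, g u = 0 → A.mulVec u = A.mulVec u0 := by
    intro u hu
    funext i
    have h0 : ∀ j ∈ Finset.univ, (0:ℝ) ≤ (A.mulVec u j - A.mulVec u0 j) ^ 2 :=
      fun j _ => sq_nonneg _
    have := (Finset.sum_eq_zero_iff_of_nonneg h0).1 hu i (Finset.mem_univ i)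
    have := pow_eq_zero_iff (n := 2) (by norm_num) |>.1 this
    linarith [this]
  -- the bad set
  set S : Set (Fin N → ℝ) :=
    {u | (∀ x, 0 ≤ u x ∧ u x ≤ 1) ∧ ∃ x, 1 / 2 ≤ |u x - u0 x|} with hSdef
  have hSclosed : IsClosed S := by
    have h1 : IsClosed {u : Fin N → ℝ | ∀ x, 0 ≤ u x ∧ u x ≤ 1} := by
      have heq : {u : Fin N → ℝ | ∀ x, 0 ≤ u x ∧ u x ≤ 1} =
          Set.pi Set.univ fun _ => Set.Icc (0:ℝ) 1 := by
        ext u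
        simp only [Set.mem_setOf_eq, Set.mem_pi, Set.mem_univ, Set.mem_Icc, forall_true_left]
      rw [heq]
      exact isClosed_set_pi fun _ _ => isClosed_Icc
    have h2 : IsClosed {u : Fin N → ℝ | ∃ x, 1 / 2 ≤ |u x - u0 x|} := by
      have heq : {u : Fin N → ℝ | ∃ x, 1 / 2 ≤ |u x - u0 x|} =
          ⋃ x, {u : Fin N → ℝ | 1 / 2 ≤ |u x - u0 x|} := by
        ext u; simp
      rw [heq]
      exact isClosed_iUnion_of_finite fun x =>
        isClosed_le continuous_const (((continuous_apply x).sub continuous_const).abs)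
    exact h1.inter h2
  have hScomp : IsCompact S := by
    have hbox : IsCompact (Set.pi Set.univ fun _ : Fin N => Set.Icc (0:ℝ) 1) :=
      isCompact_univ_pi fun _ => isCompact_Icc
    apply hbox.of_isClosed_subset hSclosed
    intro u hu
    simp only [Set.mem_pi, Set.mem_univ, Set.mem_Icc, forall_true_left]
    intro x
    exact hu.1 x
  -- the key bound
  have key : ∃ h : ℝ, 0 < h ∧ ∀ u ∈ S, 4 * h ^ 2 ≤ g u := by
    by_cases hS : S.Nonempty
    · obtain ⟨u₁, hu₁S, hmin⟩ := hScomp.exists_isMinOn hS hgcont.continuousOn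
      have hc : 0 < g u₁ := by
        rcases lt_or_eq_of_le (hgnonneg u₁) with h | h
        · exact h
        · exfalso
          have hA : A.mulVec u₁ = A.mulVec u0 := hgzero u₁ h.symm
          have heq : u₁ = u0 := huniq u₁ hA hu₁S.1
          obtain ⟨x, hx⟩ := hu₁S.2
          rw [heq, sub_self, abs_zero] at hx
          linarith
      refine ⟨Real.sqrt (g u₁) / 2, by positivity, ?_⟩
      intro u hu
      have hsq : Real.sqrt (g u₁) ^ 2 = g u₁ := Real.sq_sqrt hc.le
      have h4 : 4 * (Real.sqrt (g u₁) / 2) ^ 2 = g u₁ := by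
        rw [div_pow, hsq]; ring
      rw [h4]
      exact hmin hu
    · exact ⟨1, one_pos, fun u hu => absurd ⟨u, hu⟩ hS⟩
  obtain ⟨h, hh, hkey⟩ := key
  refine ⟨h, hh, ?_⟩
  intro ε hε ut hut hminut
  -- u0 is feasible, gives bound on perturbed objective
  have hu0box : ∀ x, 0 ≤ u0 x ∧ u0 x ≤ 1 := by
    intro x; rcases hbin x with hx | hx <;> rw [hx] <;> norm_num
  have hL : (∑ i, (A.mulVec ut i - (A.mulVec u0 i + ε i)) ^ 2) ≤ ∑ i, ε i ^ 2 := by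
    have h1 := hminut u0 hu0box
    have h2 : (∑ i, (A.mulVec u0 i - (A.mulVec u0 i + ε i)) ^ 2) = ∑ i, ε i ^ 2 := by
      apply Finset.sum_congr rfl
      intro i _
      ring
    rwa [h2] at h1
  have hLnn : (0:ℝ) ≤ ∑ i, (A.mulVec ut i - (A.mulVec u0 i + ε i)) ^ 2 :=
    Finset.sum_nonneg fun i _ => sq_nonneg _
  have hsL : Real.sqrt (∑ i, (A.mulVec ut i - (A.mulVec u0 i + ε i)) ^ 2) ≤
      Real.sqrt (∑ i, ε i ^ 2) := Real.sqrt_le_sqrt hL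
  have hmink := minkowski_aux m (fun i => A.mulVec ut i - (A.mulVec u0 i + ε i)) ε
  have hrw : (∑ i, ((fun i => A.mulVec ut i - (A.mulVec u0 i + ε i)) i + ε i) ^ 2) = g ut := by
    apply Finset.sum_congr rfl
    intro i _
    ring
  rw [hrw] at hmink
  have hgub : Real.sqrt (g ut) < 2 * h := by
    calc Real.sqrt (g ut) ≤ _ + _ := hmink
      _ ≤ Real.sqrt (∑ i, ε i ^ 2) + Real.sqrt (∑ i, ε i ^ 2) := by
          exact add_le_add hsL le_rfl
      _ < h + h := by linarith [hε]
      _ = 2 * h := by ring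
  have hgut : g ut < 4 * h ^ 2 := by
    have hs : Real.sqrt (g ut) ^ 2 = g ut := Real.sq_sqrt (hgnonneg ut)
    nlinarith [Real.sqrt_nonneg (g ut)]
  have hnotS : ut ∉ S := fun hmem => absurd (hkey ut hmem) (not_le.mpr hgut)
  have hfirst : ∀ x, |ut x - u0 x| < 1 / 2 := by
    intro x
    by_contra hcon
    push_neg at hcon
    exact hnotS ⟨hut, x, hcon⟩
  refine ⟨hfirst, ?_⟩
  intro x
  rcases hbin x with h0 | h1
  · have hx := hfirst x
    rw [h0, sub_zero] at hx
    have : ut x < 1 / 2 := lt_of_le_of_lt (le_abs_self _) hx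
    rw [if_neg (not_le.mpr this), h0]
  · have hx := hfirst x
    rw [h1, abs_lt] at hx
    have : 1 / 2 ≤ ut x := by linarith [hx.1]
    rw [if_pos this, h1]
end

section
/- Let A be a real m×N matrix, let σ ∈ {−1,+1}^N be a sign vector, and let O = {w ∈ ℝ^N : σ(i)·w(i) ≥ 0 for all i} be the corresponding closed orthant. Suppose O ∩ ker A = {0}, i.e. the only w ∈ O with A w = 0 is w = 0. Then there exists h > 0 such that for every ε ∈ ℝ^m with ‖ε‖₂ < h and every w* ∈ O minimizing w ↦ ‖A w − ε‖₂ over O, one has |w*(i)| < 1/2 for every i. -/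
private lemma en_eq {m : ℕ} (x : Fin m → ℝ) :
    Real.sqrt (∑ i, x i ^ 2) = ‖(WithLp.equiv 2 (Fin m → ℝ)).symm x‖ := by
  rw [EuclideanSpace.norm_eq]
  congr 1
  refine Finset.sum_congr rfl fun i _ => ?_
  show x i ^ 2 = ‖x i‖ ^ 2
  rw [Real.norm_eq_abs, sq_abs]

/-- Lemma in the proof of the robustness theorem: if the closed orthant `O` determined
by the sign vector `σ` meets `ker A` only at `0`, then for all small enough `ε`, every
minimizer `w*` of `‖Aw - ε‖₂` over `O` satisfies `|w*(i)| < 1/2` for every `i`. -/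
theorem stmt_17 (m N : ℕ) (A : Matrix (Fin m) (Fin N) ℝ) (σ : Fin N → ℝ)
    (hσ : ∀ i, σ i = 1 ∨ σ i = -1)
    (hker : ∀ w : Fin N → ℝ, (∀ i, 0 ≤ σ i * w i) → A.mulVec w = 0 → w = 0) :
    ∃ h : ℝ, 0 < h ∧
      ∀ ε : Fin m → ℝ, Real.sqrt (∑ i, ε i ^ 2) < h →
      ∀ w : Fin N → ℝ, (∀ i, 0 ≤ σ i * w i) →
      (∀ w' : Fin N → ℝ, (∀ i, 0 ≤ σ i * w' i) →
        Real.sqrt (∑ i, (A.mulVec w i - ε i) ^ 2) ≤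
        Real.sqrt (∑ i, (A.mulVec w' i - ε i) ^ 2)) →
      ∀ i, |w i| < 1 / 2 := by
  classical
  -- the linear map w ↦ A.mulVec w, landing in Euclidean space
  set L : (Fin N → ℝ) →ₗ[ℝ] EuclideanSpace ℝ (Fin m) :=
    (WithLp.linearEquiv 2 ℝ (Fin m → ℝ)).symm.toLinearMap ∘ₗ A.mulVecLin with hL
  have hLapp : ∀ w, L w = (WithLp.equiv 2 (Fin m → ℝ)).symm (A.mulVec w) := by
    intro w; rfl
  have hLcont : Continuous fun w => ‖L w‖ :=
    (LinearMap.continuous_of_finiteDimensional L).norm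
  -- the compact set K
  set K : Set (Fin N → ℝ) := {w | (∀ i, 0 ≤ σ i * w i) ∧ ‖w‖ = 1/2} with hK
  have hKclosed : IsClosed K := by
    have h1 : IsClosed {w : Fin N → ℝ | ∀ i, 0 ≤ σ i * w i} := by
      have : {w : Fin N → ℝ | ∀ i, 0 ≤ σ i * w i} =
          ⋂ i, {w : Fin N → ℝ | 0 ≤ σ i * w i} := by
        ext w; simp
      rw [this]
      exact isClosed_iInter fun i =>
        isClosed_le continuous_const ((continuous_const.mul (continuous_apply i)))
    have h2 : IsClosed {w : Fin N → ℝ | ‖w‖ = 1/2} :=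
      isClosed_eq continuous_norm continuous_const
    exact h1.inter h2
  have hKcompact : IsCompact K := by
    have hsub : K ⊆ Metric.closedBall 0 (1/2) := by
      intro w hw
      simp only [Metric.mem_closedBall, dist_zero_right]
      exact le_of_eq hw.2
    exact (isCompact_closedBall (0 : Fin N → ℝ) (1/2)).of_isClosed_subset hKclosed hsub
  -- positive lower bound c for ‖L w‖ on K
  have hc : ∃ c : ℝ, 0 < c ∧ ∀ w ∈ K, c ≤ ‖L w‖ := by
    rcases K.eq_empty_or_nonempty with hKe | hKne
    · exact ⟨1, one_pos, by simp [hKe]⟩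
    · obtain ⟨w₀, hw₀K, hw₀min⟩ :=
        hKcompact.exists_isMinOn hKne hLcont.continuousOn
      refine ⟨‖L w₀‖, ?_, fun w hw => hw₀min hw⟩
      have hw₀ne : w₀ ≠ 0 := by
        intro h
        rw [h] at hw₀K
        have := hw₀K.2
        simp at this
      have : L w₀ ≠ 0 := by
        intro h
        apply hw₀ne
        apply hker w₀ hw₀K.1
        have : (WithLp.equiv 2 (Fin m → ℝ)).symm (A.mulVec w₀) = 0 := by
          rw [← hLapp]; exact h
        exact (WithLp.equiv 2 (Fin m → ℝ)).symm.injective (by simpa using this)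
      exact norm_pos_iff.mpr this
  obtain ⟨c, hcpos, hcK⟩ := hc
  -- scaling: c ≤ ‖L w‖ whenever w ∈ O and 1/2 ≤ ‖w‖
  have hscale : ∀ w : Fin N → ℝ, (∀ i, 0 ≤ σ i * w i) → 1/2 ≤ ‖w‖ → c ≤ ‖L w‖ := by
    intro w hwO hwn
    have hwpos : 0 < ‖w‖ := lt_of_lt_of_le (by norm_num) hwn
    set t : ℝ := (1/2) / ‖w‖ with ht
    have htpos : 0 < t := div_pos (by norm_num) hwpos
    have htle : t ≤ 1 := by
      rw [ht, div_le_one hwpos]; exact hwn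
    have htw : t • w ∈ K := by
      constructor
      · intro i
        have : σ i * (t • w) i = t * (σ i * w i) := by
          simp [Pi.smul_apply, smul_eq_mul]; ring
        rw [this]
        exact mul_nonneg htpos.le (hwO i)
      · rw [norm_smul, Real.norm_eq_abs, abs_of_pos htpos, ht,
          div_mul_cancel₀ _ (ne_of_gt hwpos)]
    have h1 : c ≤ ‖L (t • w)‖ := hcK _ htw
    rw [map_smul, norm_smul, Real.norm_eq_abs, abs_of_pos htpos] at h1
    calc c ≤ t * ‖L w‖ := h1
      _ ≤ 1 * ‖L w‖ := mul_le_mul_of_nonneg_right htle (norm_nonneg _)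
      _ = ‖L w‖ := one_mul _
  -- conclusion with h = c / 2
  refine ⟨c / 2, by positivity, ?_⟩
  intro ε hε w hwO hwmin i
  by_contra hcon
  push_neg at hcon
  have hwn : 1/2 ≤ ‖w‖ := le_trans hcon (norm_le_pi_norm w i)
  have hge : c ≤ ‖L w‖ := hscale w hwO hwn
  -- use the minimality at w' = 0
  have h0 : Real.sqrt (∑ j, (A.mulVec w j - ε j) ^ 2) ≤ Real.sqrt (∑ j, ε j ^ 2) := by
    have := hwmin 0 (fun j => by simp)
    simpa [Matrix.mulVec_zero] using this
  set e : EuclideanSpace ℝ (Fin m) := (WithLp.equiv 2 (Fin m → ℝ)).symm ε with he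
  have hεnorm : ‖e‖ < c / 2 := by rw [he, ← en_eq]; exact hε
  have hsub : (fun j => A.mulVec w j - ε j) = A.mulVec w - ε := rfl
  have hdiff : Real.sqrt (∑ j, (A.mulVec w j - ε j) ^ 2) = ‖L w - e‖ := by
    rw [en_eq]
    congr 1
  have hLe : ‖L w - e‖ ≤ ‖e‖ := by
    rw [← hdiff, he, ← en_eq]; exact h0
  have : ‖L w‖ ≤ ‖L w - e‖ + ‖e‖ := by
    have := norm_add_le (L w - e) e
    simpa using this
  have : ‖L w‖ < c := by
    calc ‖L w‖ ≤ ‖L w - e‖ + ‖e‖ := this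
      _ ≤ ‖e‖ + ‖e‖ := add_le_add_left hLe _
      _ < c / 2 + c / 2 := by linarith
      _ = c := by ring
  linarith
end

section
/- Let A be a real m×N matrix, σ ∈ {−1,+1}^N a sign vector, and O = {w ∈ ℝ^N : σ(i)·w(i) ≥ 0 for all i} the corresponding closed orthant. If w* ∈ O minimizes w ↦ ‖A w − ε‖₂ over O for some ε ∈ ℝ^m, then ⟨A w*, A w* − ε⟩ = 0, and consequently ‖A w*‖₂² + ‖A w* − ε‖₂² = ‖ε‖₂², so in particular ‖A w*‖₂ ≤ ‖ε‖₂. -/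
/-- Orthogonality property of least-squares minimizers over a closed orthant: if `w*`
minimizes `‖Aw - ε‖₂` over the orthant `O`, then `⟨Aw*, Aw* - ε⟩ = 0`, hence
`‖Aw*‖₂² + ‖Aw* - ε‖₂² = ‖ε‖₂²` and in particular `‖Aw*‖₂ ≤ ‖ε‖₂`. -/
theorem stmt_18 (m N : ℕ) (A : Matrix (Fin m) (Fin N) ℝ) (σ : Fin N → ℝ)
    (hσ : ∀ i, σ i = 1 ∨ σ i = -1)
    (ε : Fin m → ℝ) (w : Fin N → ℝ) (hw : ∀ i, 0 ≤ σ i * w i)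
    (hmin : ∀ w' : Fin N → ℝ, (∀ i, 0 ≤ σ i * w' i) →
      Real.sqrt (∑ i, (A.mulVec w i - ε i) ^ 2) ≤
      Real.sqrt (∑ i, (A.mulVec w' i - ε i) ^ 2)) :
    (∑ i, A.mulVec w i * (A.mulVec w i - ε i)) = 0 ∧
    (∑ i, (A.mulVec w i) ^ 2) + (∑ i, (A.mulVec w i - ε i) ^ 2) = (∑ i, ε i ^ 2) ∧
    Real.sqrt (∑ i, (A.mulVec w i) ^ 2) ≤ Real.sqrt (∑ i, ε i ^ 2) := by
  set f : Fin m → ℝ := A.mulVec w with hf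
  set a : ℝ := ∑ i, f i ^ 2 with hadef
  set b : ℝ := ∑ i, f i * ε i with hbdef
  set c : ℝ := ∑ i, ε i ^ 2 with hcdef
  have ha : 0 ≤ a := Finset.sum_nonneg fun i _ => sq_nonneg _
  have expand : ∀ t : ℝ, (∑ i, (t * f i - ε i) ^ 2) = t ^ 2 * a - 2 * t * b + c := by
    intro t
    rw [hadef, hbdef, hcdef, Finset.mul_sum, Finset.mul_sum, ← Finset.sum_sub_distrib,
      ← Finset.sum_add_distrib]
    exact Finset.sum_congr rfl fun i _ => by ring
  have key : ∀ t : ℝ, 0 ≤ t → a - 2 * b + c ≤ t ^ 2 * a - 2 * t * b + c := by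
    intro t ht
    have horth : ∀ i, 0 ≤ σ i * (t • w) i := fun i => by
      have := mul_nonneg ht (hw i)
      simp only [Pi.smul_apply, smul_eq_mul]
      nlinarith [hw i]
    have h := hmin (t • w) horth
    have hnn : (0:ℝ) ≤ ∑ i, (A.mulVec w i - ε i) ^ 2 :=
      Finset.sum_nonneg fun i _ => sq_nonneg _
    have hsum : (∑ i, (A.mulVec w i - ε i) ^ 2) ≤ ∑ i, (A.mulVec (t • w) i - ε i) ^ 2 := by
      by_contra hcon
      push_neg at hcon
      have := Real.sqrt_lt_sqrt (Finset.sum_nonneg fun i _ => sq_nonneg _) hcon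
      linarith
    have hsm : ∀ i, A.mulVec (t • w) i = t * f i := by
      intro i
      rw [hf, Matrix.mulVec_smul]
      rfl
    have h1 : (∑ i, (A.mulVec (t • w) i - ε i) ^ 2) = t ^ 2 * a - 2 * t * b + c := by
      rw [← expand t]
      exact Finset.sum_congr rfl fun i _ => by rw [hsm i]
    have h2 : (∑ i, (A.mulVec w i - ε i) ^ 2) = a - 2 * b + c := by
      have := expand 1
      simp only [one_pow, one_mul, mul_one] at this
      rw [← this]
    rw [h1, h2] at hsum
    exact hsum
  -- derive a = b
  have hb0 : a ≤ 2 * b := by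
    have := key 0 le_rfl
    nlinarith [this]
  have hbnn : 0 ≤ b := by linarith
  have hab : a = b := by
    rcases eq_or_lt_of_le ha with h0 | hpos
    · -- a = 0
      have h2 := key 2 (by norm_num)
      nlinarith [h2]
    · have h1 := key (b / a) (div_nonneg hbnn hpos.le)
      have h2 : (a - 2 * b) * a ≤ ((b / a) ^ 2 * a - 2 * (b / a) * b) * a := by
        nlinarith [h1]
      have h3 : ((b / a) ^ 2 * a - 2 * (b / a) * b) * a = -(b ^ 2) := by
        field_simp
        ring
      rw [h3] at h2
      have h4 : (a - b) ^ 2 ≤ 0 := by nlinarith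
      have h5 : (a - b) ^ 2 = 0 := le_antisymm h4 (sq_nonneg _)
      have := pow_eq_zero_iff (n := 2) (by norm_num) |>.mp h5
      linarith [sub_eq_zero.mp this]
  have g1 : (∑ i, A.mulVec w i * (A.mulVec w i - ε i)) = 0 := by
    have : (∑ i, A.mulVec w i * (A.mulVec w i - ε i)) = a - b := by
      rw [hadef, hbdef, ← Finset.sum_sub_distrib]
      exact Finset.sum_congr rfl fun i _ => by rw [← hf]; ring
    rw [this, hab, sub_self]
  have hres : (∑ i, (A.mulVec w i - ε i) ^ 2) = a - 2 * b + c := by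
    have := expand 1
    simp only [one_pow, one_mul, mul_one] at this
    rw [← this]
  refine ⟨g1, ?_, ?_⟩
  · rw [hres]; linarith
  · apply Real.sqrt_le_sqrt
    have hnn2 : (0:ℝ) ≤ ∑ i, (A.mulVec w i - ε i) ^ 2 :=
      Finset.sum_nonneg fun i _ => sq_nonneg _
    rw [hres] at hnn2
    linarith [hab ▸ hnn2]
end
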